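/- Let K be a real algebraic number field. Then ℘_K, the set of Pisot numbers generating K, is relatively dense in [1, ∞): there exists ρ' > 0 such that every subinterval of [1, ∞) of the form (x, x + ρ'] contains an element of ℘_K. -/

import Mathlib

set_option maxHeartbeats 1000000
set_option synthInstance.maxHeartbeats 400000


open IntermediateField

/-- The "identity" embedding of a real number field `K ⊆ ℝ` into `ℂ`. -/
noncomputable def iotaK (K : IntermediateField ℚ ℝ) : ↥K →+* ℂ :=
  Complex.ofRealHom.comp (algebraMap ↥K ℝ)

/-- `℘_K`: the set of Pisot numbers `θ ∈ K` with `ℚ(θ) = K`. -/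
def pisotGen (K : IntermediateField ℚ ℝ) : Set ↥K :=
  {θ | IsIntegral ℤ θ ∧ 1 < (θ : ℝ) ∧
    IntermediateField.adjoin ℚ ({θ} : Set ↥K) = ⊤ ∧
    ∀ σ : ↥K →+* ℂ, σ ≠ iotaK K → ‖σ θ‖ < 1}

open NumberField NumberField.InfinitePlace NumberField.mixedEmbedding

section Aux

variable (K : IntermediateField ℚ ℝ)

lemma iotaK_apply (x : ↥K) : iotaK K x = ((x : ℝ) : ℂ) := rfl

lemma iotaK_isReal : ComplexEmbedding.IsReal (iotaK K) := by
  rw [ComplexEmbedding.isReal_iff]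
  ext x
  rw [ComplexEmbedding.conjugate_coe_eq, iotaK_apply, Complex.conj_ofReal]

/-- If `θ > 1` and all embeddings other than the identity send `θ` to something of
modulus `< 1`, then `θ` generates `K` over `ℚ`. -/
lemma adjoin_eq_top_of_small (θ : ↥K) [FiniteDimensional ℚ ↥K] (hθ : 1 < (θ : ℝ))
    (h : ∀ σ : ↥K →+* ℂ, σ ≠ iotaK K → ‖σ θ‖ < 1) :
    IntermediateField.adjoin ℚ ({θ} : Set ↥K) = ⊤ := by
  by_contra hne
  set L := IntermediateField.adjoin ℚ ({θ} : Set ↥K) with hLdef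
  haveI : FiniteDimensional ↥L ↥K := Module.Finite.right ℚ ↥L ↥K
  -- the degree of `K` over `L` is at least 2
  have hone : Module.finrank ↥L ↥K ≠ 1 := by
    intro h1
    apply hne
    rw [eq_top_iff]
    intro x _
    obtain ⟨c, hc⟩ := (finrank_eq_one_iff_of_nonzero' (1 : ↥K) one_ne_zero).mp h1 x
    rw [Algebra.smul_def, mul_one] at hc
    rw [← hc]
    have hmap : algebraMap ↥L ↥K c = (c : ↥K) := rfl
    rw [hmap]
    exact c.2
  have hpos : 0 < Module.finrank ↥L ↥K := Module.finrank_pos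
  have h2 : 1 < Module.finrank ↥L ↥K := by omega
  -- consider the `L`-algebra homomorphisms from `K` to `ℂ`
  letI : Algebra ↥L ℂ := ((iotaK K).comp (algebraMap ↥L ↥K)).toAlgebra
  have hcard : Fintype.card (↥K →ₐ[↥L] ℂ) = Module.finrank ↥L ↥K := AlgHom.card ↥L ↥K ℂ
  obtain ⟨f, g, hfg⟩ := Fintype.exists_pair_of_one_lt_card (by rw [hcard]; exact h2)
  have hθL : θ ∈ L := IntermediateField.mem_adjoin_simple_self ℚ θ
  have key : ∀ f : ↥K →ₐ[↥L] ℂ, f θ = ((θ : ℝ) : ℂ) := by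
    intro f
    have hcomm := f.commutes ⟨θ, hθL⟩
    have halg : algebraMap ↥L ↥K (⟨θ, hθL⟩ : ↥L) = θ := rfl
    rw [halg] at hcomm
    rw [hcomm, RingHom.algebraMap_toAlgebra, RingHom.comp_apply, halg, iotaK_apply]
  have hfg' : (f : ↥K →+* ℂ) ≠ (g : ↥K →+* ℂ) := by
    intro hh
    exact hfg (AlgHom.ext fun x => by
      have := congrArg (fun φ : ↥K →+* ℂ => φ x) hh
      simpa using this)
  have hex : ∃ σ : ↥K →+* ℂ, σ ≠ iotaK K ∧ σ θ = ((θ : ℝ) : ℂ) := by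
    by_cases hfi : (f : ↥K →+* ℂ) = iotaK K
    · exact ⟨(g : ↥K →+* ℂ), by rw [← hfi]; exact (Ne.symm hfg'), key g⟩
    · exact ⟨(f : ↥K →+* ℂ), hfi, key f⟩
  obtain ⟨σ, hσ, hσθ⟩ := hex
  have := h σ hσ
  rw [hσθ] at this
  rw [Complex.norm_real, Real.norm_eq_abs, abs_of_pos (by linarith)] at this
  linarith

variable [FiniteDimensional ℚ ↥K]

lemma charZeroK : CharZero ↥K :=
  (algebraMap ↥K ℝ).charZero

lemma numberFieldK : NumberField ↥K := by
  haveI := charZeroK K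
  exact ⟨⟩

/-- The distinguished real infinite place of `K`. -/
noncomputable def wIota : InfinitePlace ↥K := InfinitePlace.mk (iotaK K)

lemma wIota_isReal : (wIota K).IsReal := isReal_mk_iff.mpr (iotaK_isReal K)

lemma wIota_injective {σ : ↥K →+* ℂ} (hσ : InfinitePlace.mk σ = wIota K) : σ = iotaK K := by
  rcases mk_eq_iff.mp hσ with h | h
  · exact h
  · ext x
    have hx := RingHom.congr_fun h x
    rw [ComplexEmbedding.conjugate_coe_eq] at hx
    have hx2 := congrArg (starRingEnd ℂ) hx
    rwa [Complex.conj_conj, iotaK_apply, Complex.conj_ofReal, ← iotaK_apply] at hx2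

open Classical in
/-- The vector `t · e_{w₀}` in the mixed space. -/
noncomputable def vK (t : ℝ) : mixedSpace ↥K :=
  (fun w => if w.1 = wIota K then t else 0, 0)

lemma vK_sub (t s : ℝ) : vK K t - vK K s = vK K (t - s) := by
  classical
  unfold vK
  ext w
  · simp only [Prod.fst_sub, Pi.sub_apply]
    by_cases h : w.1 = wIota K <;> simp [h]
  · simp

end Aux

section Lattice

variable (K : IntermediateField ℚ ℝ) [FiniteDimensional ℚ K] [NumberField ↥K]

open scoped Classical in
lemma normAtPlace_le_norm (w : InfinitePlace ↥K) (x : mixedSpace ↥K) :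
    normAtPlace w x ≤ ‖x‖ := by
  rw [norm_eq_sup'_normAtPlace]
  exact Finset.le_sup' (fun w => normAtPlace w x) (Finset.mem_univ w)

open scoped Classical in
/-- Key approximation lemma: there is a syndetic set of `r` such that `r · e_{w₀}` is within
`ε` of the image of the ring of integers under the mixed embedding. -/
lemma exists_syndetic_approx (ε : ℝ) (hε : 0 < ε) :
    ∃ T : ℝ, 0 < T ∧ ∀ x : ℝ, ∃ r : ℝ, x < r ∧ r ≤ x + T ∧
      ∃ a : 𝓞 ↥K, ‖vK K r - mixedEmbedding ↥K (algebraMap (𝓞 ↥K) ↥K a)‖ < ε := by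
  classical
  set b := latticeBasis ↥K with hb
  set f : ℝ → mixedSpace ↥K := fun t => ZSpan.fract b (vK K t) with hf
  have hXb : Bornology.IsBounded (Set.range f) := by
    refine (ZSpan.fundamentalDomain_isBounded b).subset ?_
    rintro _ ⟨t, rfl⟩
    exact ZSpan.fract_mem_fundamentalDomain b _
  have hX : IsCompact (closure (Set.range f)) := hXb.isCompact_closure
  obtain ⟨s, hs_sub, hs_cover⟩ := hX.elim_nhds_subcover (fun p => Metric.ball p (ε / 2))
    (fun p _ => Metric.ball_mem_nhds p (by positivity))
  have hpick : ∀ p ∈ s, ∃ t : ℝ, dist p (f t) < ε / 2 := by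
    intro p hp
    have hp' := hs_sub p hp
    rw [Metric.mem_closure_iff] at hp'
    obtain ⟨q, ⟨t, rfl⟩, hq⟩ := hp' (ε / 2) (by positivity)
    exact ⟨t, hq⟩
  choose! g hg using hpick
  have hs_ne : s.Nonempty := by
    rcases s.eq_empty_or_nonempty with h | h
    · exfalso
      have h0 : f 0 ∈ closure (Set.range f) := subset_closure ⟨0, rfl⟩
      have := hs_cover h0
      rw [h] at this
      simpa using this
    · exact h
  set S : Finset ℝ := s.image g with hS
  have hS_ne : S.Nonempty := hs_ne.image g
  set m := S.min' hS_ne with hm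
  set M := S.max' hS_ne with hM
  refine ⟨M - m + 1, by have := S.min'_le (S.max' hS_ne) (S.max'_mem hS_ne); linarith, fun x => ?_⟩
  -- apply the covering to `t = x + 1 + M`
  set t : ℝ := x + 1 + M with ht
  have hft : f t ∈ closure (Set.range f) := subset_closure ⟨t, rfl⟩
  have := hs_cover hft
  rw [Set.mem_iUnion₂] at this
  obtain ⟨p, hp, hmem⟩ := this
  have h1 : dist (f t) (f (g p)) < ε := by
    have h2 : dist (f t) p < ε / 2 := Metric.mem_ball.mp hmem
    have h3 : dist p (f (g p)) < ε / 2 := hg p hp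
    calc dist (f t) (f (g p)) ≤ dist (f t) p + dist p (f (g p)) := dist_triangle _ _ _
      _ < ε / 2 + ε / 2 := by linarith
      _ = ε := by ring
  set s' : ℝ := g p with hs'
  have hs'S : s' ∈ S := Finset.mem_image_of_mem g hp
  refine ⟨t - s', by have := S.le_max' s' hs'S; simp only [ht]; linarith,
    by have := S.min'_le s' hs'S; simp only [ht]; linarith, ?_⟩
  -- the lattice point
  set lam : mixedSpace ↥K :=
    (ZSpan.floor b (vK K t) : mixedSpace ↥K) - (ZSpan.floor b (vK K s') : mixedSpace ↥K)
    with hlam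
  have hlam_mem : lam ∈ Submodule.span ℤ (Set.range (b : _ → mixedSpace ↥K)) :=
    sub_mem (SetLike.coe_mem _) (SetLike.coe_mem _)
  have hlam_mem' : lam ∈ NumberField.mixedEmbedding.integerLattice ↥K := by
    rw [← mem_span_latticeBasis]
    exact hlam_mem
  obtain ⟨a, ha⟩ := LinearMap.mem_range.mp hlam_mem'
  refine ⟨a, ?_⟩
  have haa : mixedEmbedding ↥K (algebraMap (𝓞 ↥K) ↥K a) = lam := ha
  rw [haa]
  have hrew : vK K (t - s') - lam = f t - f s' := by
    rw [← vK_sub, hlam]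
    simp only [hf, ZSpan.fract_apply]
    abel
  rw [hrew, ← dist_eq_norm]
  exact h1

end Lattice

/-- `℘_K` is relatively dense in `[1, ∞)`: there is `ρ' > 0` such that every interval
`(x, x + ρ']` with `x ≥ 1` contains an element of `℘_K`. -/
theorem pisotGen_relDense (K : IntermediateField ℚ ℝ) [FiniteDimensional ℚ K] :
    ∃ ρ' : ℝ, 0 < ρ' ∧ ∀ x : ℝ, 1 ≤ x →
      ∃ θ ∈ pisotGen K, x < (θ : ℝ) ∧ (θ : ℝ) ≤ x + ρ' := by
  classical
  haveI : NumberField ↥K := numberFieldK K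
  obtain ⟨T, hT, hsyn⟩ := exists_syndetic_approx K (1 / 2) (by norm_num)
  refine ⟨T + 1, by linarith, fun x hx => ?_⟩
  obtain ⟨r, hr1, hr2, a, ha⟩ := hsyn (x + 1 / 2)
  set θ : ↥K := algebraMap (𝓞 ↥K) ↥K a with hθdef
  set y : mixedSpace ↥K := vK K r - mixedEmbedding ↥K θ with hy
  -- first coordinate estimate: |r - θ| < 1/2
  have hw₀ : (wIota K).IsReal := wIota_isReal K
  have hcomp1 : (vK K r).1 ⟨wIota K, hw₀⟩ = r := by
    classical
    simp [vK]
  have hemb : embedding_of_isReal hw₀ θ = (θ : ℝ) := by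
    have h1 : ((embedding_of_isReal hw₀ θ : ℝ) : ℂ) = embedding (wIota K) θ :=
      embedding_of_isReal_apply hw₀ θ
    have h2 : embedding (wIota K) = iotaK K :=
      embedding_mk_eq_of_isReal (iotaK_isReal K)
    rw [h2, iotaK_apply] at h1
    exact_mod_cast h1
  have hreal : |r - (θ : ℝ)| < 1 / 2 := by
    have h1 : normAtPlace (wIota K) y ≤ ‖y‖ := normAtPlace_le_norm K _ _
    have h2 : normAtPlace (wIota K) y = ‖y.1 ⟨wIota K, hw₀⟩‖ :=
      normAtPlace_apply_of_isReal hw₀ y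
    have h3 : y.1 ⟨wIota K, hw₀⟩ = r - (θ : ℝ) := by
      rw [hy]
      simp only [Prod.fst_sub, Pi.sub_apply, hcomp1, mixedEmbedding_apply_isReal, hemb]
    rw [h3] at h2
    rw [h2] at h1
    calc |r - (θ : ℝ)| = ‖r - (θ : ℝ)‖ := (Real.norm_eq_abs _).symm
      _ ≤ ‖y‖ := h1
      _ < 1 / 2 := ha
  have hθ_gt : x < (θ : ℝ) := by
    rcases abs_lt.mp hreal with ⟨h1, h2⟩
    linarith
  have hθ_le : (θ : ℝ) ≤ x + (T + 1) := by
    rcases abs_lt.mp hreal with ⟨h1, h2⟩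
    linarith
  -- the other embeddings are small
  have hsmall : ∀ σ : ↥K →+* ℂ, σ ≠ iotaK K → ‖σ θ‖ < 1 := by
    intro σ hσ
    classical
    set w : InfinitePlace ↥K := InfinitePlace.mk σ with hw
    have hwne : w ≠ wIota K := fun h => hσ (wIota_injective K h)
    have hv0 : normAtPlace w (vK K r) = 0 := by
      rcases isReal_or_isComplex w with hre | hco
      · rw [normAtPlace_apply_of_isReal hre]
        have : (vK K r).1 ⟨w, hre⟩ = 0 := by
          simp only [vK]
          rw [if_neg hwne]
        rw [this, norm_zero]
      · rw [normAtPlace_apply_of_isComplex hco]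
        simp [vK]
    have habs : ‖σ θ‖ = w θ := (InfinitePlace.apply σ θ).symm
    have hwmix : w θ = normAtPlace w (mixedEmbedding ↥K θ) := (normAtPlace_apply w θ).symm
    have hsplit : normAtPlace w (mixedEmbedding ↥K θ) ≤
        normAtPlace w (vK K r) + normAtPlace w (-y) := by
      have : mixedEmbedding ↥K θ = vK K r + (-y) := by rw [hy]; abel
      rw [this]
      exact normAtPlace_add_le w _ _
    rw [normAtPlace_neg] at hsplit
    have h4 : normAtPlace w y ≤ ‖y‖ := normAtPlace_le_norm K _ _
    rw [habs, hwmix]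
    rw [hv0, zero_add] at hsplit
    calc normAtPlace w (mixedEmbedding ↥K θ) ≤ normAtPlace w y := hsplit
      _ ≤ ‖y‖ := h4
      _ < 1 / 2 := ha
      _ < 1 := by norm_num
  have hθ1 : 1 < (θ : ℝ) := lt_of_le_of_lt hx hθ_gt
  refine ⟨θ, ⟨?_, hθ1, adjoin_eq_top_of_small K θ hθ1 hsmall, hsmall⟩, hθ_gt, hθ_le⟩
  exact NumberField.RingOfIntegers.isIntegral_coe a
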